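/- Irreducible bases are unique: if F and F' are both irreducible finite families and closure(F) = closure(F'), then F = F'. -/
import Mathlib


variable {α : Type*} [DecidableEq α]

/-- A family is union-closed. -/
def UC (F : Finset (Finset α)) : Prop := ∀ A ∈ F, ∀ B ∈ F, A ∪ B ∈ F

/-- Number of members of `F` containing `a`. -/
def cnt (a : α) (F : Finset (Finset α)) : ℕ := (F.filter (fun A => a ∈ A)).card

/-- Union-ucClosure: all unions of nonempty subfamilies. -/
def ucClosure (F : Finset (Finset α)) : Finset (Finset α) :=
  (F.powerset.filter (fun G => G.Nonempty)).image (fun G => G.sup id)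

/-- FC-family. -/
def IsFC (Fc : Finset (Finset α)) : Prop :=
  ∀ F : Finset (Finset α), UC F → Fc ⊆ F →
    ∃ a ∈ Fc.sup id, 2 * cnt a F ≥ F.card

/-- A family is irreducible if no member is the union of a nonempty subfamily
of the other members. -/
def Irred (G : Finset (Finset α)) : Prop :=
  ∀ A ∈ G, ¬ ∃ G' : Finset (Finset α), G' ⊆ G.erase A ∧ G'.Nonempty ∧ A = G'.sup id

lemma mem_ucClosure {F : Finset (Finset α)} {A : Finset α} :
    A ∈ ucClosure F ↔ ∃ G, G ⊆ F ∧ G.Nonempty ∧ A = G.sup id := by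
  simp only [ucClosure, Finset.mem_image, Finset.mem_filter, Finset.mem_powerset]
  constructor
  · rintro ⟨G, ⟨hsub, hne⟩, rfl⟩; exact ⟨G, hsub, hne, rfl⟩
  · rintro ⟨G, hsub, hne, rfl⟩; exact ⟨G, ⟨hsub, hne⟩, rfl⟩

lemma self_mem_ucClosure {F : Finset (Finset α)} {A : Finset α} (hA : A ∈ F) :
    A ∈ ucClosure F :=
  mem_ucClosure.mpr ⟨{A}, by simpa using hA, ⟨A, by simp⟩, by simp⟩

lemma irred_subset (F F' : Finset (Finset α)) (hF : Irred F)
    (h : ucClosure F = ucClosure F') : F ⊆ F' := by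
  intro A hA
  have hA1 : A ∈ ucClosure F' := by rw [← h]; exact self_mem_ucClosure hA
  obtain ⟨G', hG'sub, hG'ne, hAsup⟩ := mem_ucClosure.mp hA1
  by_cases hAG : A ∈ G'
  · exact hG'sub hAG
  · exfalso
    have hB : ∀ B ∈ G', ∃ H, H ⊆ F ∧ H.Nonempty ∧ B = H.sup id := by
      intro B hBmem
      have : B ∈ ucClosure F := by rw [h]; exact self_mem_ucClosure (hG'sub hBmem)
      exact mem_ucClosure.mp this
    have hBle : ∀ B ∈ G', B ⊆ A := fun B hBmem => hAsup ▸ Finset.le_sup (f := id) hBmem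
    set H := (F.erase A).filter (fun C => C ⊆ A) with hHdef
    have hCH : ∀ B ∈ G', ∀ HB, HB ⊆ F → B = HB.sup id → ∀ C ∈ HB, C ∈ H := by
      intro B hBmem HB hHBsub hBsup C hC
      have hCB : C ⊆ B := hBsup ▸ Finset.le_sup (f := id) hC
      have hCA : C ⊆ A := hCB.trans (hBle B hBmem)
      have hCneA : C ≠ A := by
        rintro rfl
        have : B = C := Finset.Subset.antisymm (hBle B hBmem) hCB
        exact hAG (this ▸ hBmem)
      exact Finset.mem_filter.mpr ⟨Finset.mem_erase.mpr ⟨hCneA, hHBsub hC⟩, hCA⟩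
    have hHsup : A = H.sup id := by
      apply le_antisymm
      · rw [hAsup]
        apply Finset.sup_le
        intro B hBmem
        obtain ⟨HB, hHBsub, hHBne, hBsup⟩ := hB B hBmem
        rw [hBsup]
        exact Finset.sup_le fun C hC =>
          Finset.le_sup (f := id) (hCH B hBmem HB hHBsub hBsup C hC)
      · exact Finset.sup_le fun C hC => (Finset.mem_filter.mp hC).2
    have hHne : H.Nonempty := by
      obtain ⟨B, hBmem⟩ := hG'ne
      obtain ⟨HB, hHBsub, ⟨C, hC⟩, hBsup⟩ := hB B hBmem
      exact ⟨C, hCH B hBmem HB hHBsub hBsup C hC⟩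
    exact hF A hA ⟨H, Finset.filter_subset _ _, hHne, hHsup⟩

theorem irreducible_unique (F F' : Finset (Finset α))
    (hF : Irred F) (hF' : Irred F') (h : ucClosure F = ucClosure F') : F = F' :=
  Finset.Subset.antisymm (irred_subset F F' hF h) (irred_subset F' F hF' h.symm)
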